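/- Let H be a real Hilbert space, T : H → 2^H a maximal monotone operator with s ∈ S := T⁻¹(0), and let (z_n) be generated by (mPPA): z_{n+1} = λ_n u + γ_n z_n + δ_n J_{c_n}(z_n) + e_n, where u, z₀ ∈ H, (λ_n), (γ_n), (δ_n) ⊂ (0,1) with λ_n + γ_n + δ_n = 1, c_n > 0 and e_n ∈ H. Assume a, c ∈ ℕ \ {0} and monotone functions ℓ, E : ℕ → ℕ satisfy: (Q1) λ_n ≤ 1/(k+1) for all n ≥ ℓ(k); (Q3) 1/a ≤ γ_m ≤ 1 − 1/a for all m; (Q4) c_n ≥ 1/c for all n; (Q6) ∑_{i=E(k)+1}^{E(k)+n} ‖e_i‖ ≤ 1/(k+1) for all k, n. Let N₁ ≥ ‖u‖, N₂ ≥ ∑_{i=0}^{E(0)} ‖e_i‖ + 1, N₃ ≥ max{‖u − s‖, ‖z₀ − s‖}, and N₀ := N₂ + N₃. Let (w_n) be such that z_{n+1} = γ_n z_n + (1 − γ_n) w_n, and let χ : ℕ × ℕ^ℕ → ℕ be a monotone functional such that for every k and monotone f there is n ≤ χ(k,f) with ‖w_m − z_m‖ ≤ 1/(k+1) for all m ∈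 [n, n+f(n)]. Then for every k ∈ ℕ and every monotone f : ℕ → ℕ: (i) there is n ≤ χ(k,f) with ‖z_{m+1} − z_m‖ ≤ 1/(k+1) for all m ∈ [n, n+f(n)]; (ii) there is n ≤ max{ μ(k), χ(2a(k+1), f̃_k) } with ‖J_{c_m}(z_m) − z_m‖ ≤ 1/(k+1) for all m ∈ [n, n+f(n)]; (iii) there is n ≤ ξ_χ(k,f) with ‖J_{1/c}(z_m) − z_m‖ ≤ 1/(k+1) for all m ∈ [n, n+f(n)]; where μ(k) := max{ ℓ(4a(k+1)(N₀+N₃)), E(4a(k+1)) + 1 }, f̃_k(m) := μ(k) + f(max{μ(k), m}) and ξ_χ(k,f) := max{ μ(2k+1), χ(4a(k+1), f̃_{2k+1}) }. -/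

import Mathlib

open scoped Pointwise RealInnerProductSpace

/-- A set-valued operator `T : H → Set H` is monotone. -/
def IsMonotoneOp {H : Type*} [NormedAddCommGroup H] [InnerProductSpace ℝ H]
    (T : H → Set H) : Prop :=
  ∀ x x' y y' : H, y ∈ T x → y' ∈ T x' → 0 ≤ ⟪x - x', y - y'⟫

/-- `T` is maximal monotone. -/
def IsMaximalMonotoneOp {H : Type*} [NormedAddCommGroup H] [InnerProductSpace ℝ H]
    (T : H → Set H) : Prop :=
  IsMonotoneOp T ∧ ∀ T' : H → Set H, IsMonotoneOp T' → (∀ x, T x ⊆ T' x) → T' = T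

/-- `J` is the family of resolvents of `T`: `J c = (I + c T)⁻¹` for `c > 0`. -/
def IsResolventFamilyOf {H : Type*} [NormedAddCommGroup H] [InnerProductSpace ℝ H]
    (J : ℝ → H → H) (T : H → Set H) : Prop :=
  ∀ c : ℝ, 0 < c → ∀ x : H, x - J c x ∈ c • T (J c x)

/-- `g ≤* f` : strong majorization for functions `ℕ → ℕ`. -/
def FunMaj (g f : ℕ → ℕ) : Prop := ∀ n : ℕ, ∀ m ≤ n, g m ≤ f n ∧ f m ≤ f n

/-- A functional `Φ : ℕ × ℕ^ℕ → ℕ` is monotone. -/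
def MonotoneFunctional (Φ : ℕ → (ℕ → ℕ) → ℕ) : Prop :=
  ∀ n : ℕ, ∀ f : ℕ → ℕ, ∀ m ≤ n, ∀ g : ℕ → ℕ, FunMaj g f → Φ m g ≤ Φ n f

/-- `μ(k) := max{ℓ(4a(k+1)(N₀+N₃)), E(4a(k+1))+1}`. -/
def muFun (ℓ E : ℕ → ℕ) (a N₀ N₃ k : ℕ) : ℕ :=
  max (ℓ (4*a*(k+1)*(N₀+N₃))) (E (4*a*(k+1)) + 1)

/-- `f̃_k(m) := μ(k) + f(max{μ(k), m})`. -/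
def fTilde (ℓ E : ℕ → ℕ) (a N₀ N₃ k : ℕ) (f : ℕ → ℕ) (m : ℕ) : ℕ :=
  muFun ℓ E a N₀ N₃ k + f (max (muFun ℓ E a N₀ N₃ k) m)

/-- `ξ_χ(k,f) := max{μ(2k+1), χ(4a(k+1), f̃_{2k+1})}`. -/
def xiChi (ℓ E : ℕ → ℕ) (a N₀ N₃ : ℕ) (χ : ℕ → (ℕ → ℕ) → ℕ) (k : ℕ) (f : ℕ → ℕ) : ℕ :=
  max (muFun ℓ E a N₀ N₃ (2*k+1)) (χ (4*a*(k+1)) (fTilde ℓ E a N₀ N₃ (2*k+1) f))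

section Aux

variable {H : Type*} [NormedAddCommGroup H] [InnerProductSpace ℝ H]

lemma resolvent_fix {T : H → Set H} (hT : IsMonotoneOp T) {J : ℝ → H → H}
    (hJ : IsResolventFamilyOf J T) {s : H} (hs : (0:H) ∈ T s) {c : ℝ} (hc : 0 < c) :
    J c s = s := by
  obtain ⟨y, hy, hcy⟩ := hJ c hc s
  simp only at hcy
  have h1 : 0 ≤ ⟪J c s - s, y - 0⟫ := hT _ _ _ _ hy hs
  rw [sub_zero] at h1
  have h2 : 0 ≤ ⟪J c s - s, c • y⟫ := by
    rw [real_inner_smul_right]; positivity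
  rw [hcy] at h2
  have h3 : ⟪J c s - s, s - J c s⟫ = - ‖J c s - s‖^2 := by
    rw [show s - J c s = -(J c s - s) by abel, inner_neg_right, real_inner_self_eq_norm_sq]
  rw [h3] at h2
  have h4 : ‖J c s - s‖ = 0 := by nlinarith [norm_nonneg (J c s - s)]
  exact sub_eq_zero.mp (norm_eq_zero.mp h4)

/-- nonexpansiveness towards a zero `s` of `T`. -/
lemma resolvent_nonexp {T : H → Set H} (hT : IsMonotoneOp T) {J : ℝ → H → H}
    (hJ : IsResolventFamilyOf J T) {s : H} (hs : (0:H) ∈ T s) {c : ℝ} (hc : 0 < c)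
    (x : H) : ‖J c x - s‖ ≤ ‖x - s‖ := by
  obtain ⟨y, hy, hcy⟩ := hJ c hc x
  simp only at hcy
  have h1 : 0 ≤ ⟪J c x - s, y - 0⟫ := hT _ _ _ _ hy hs
  rw [sub_zero] at h1
  have h2 : 0 ≤ ⟪J c x - s, c • y⟫ := by
    rw [real_inner_smul_right]; positivity
  rw [hcy] at h2
  have h3 : ⟪J c x - s, x - J c x⟫ = ⟪J c x - s, x - s⟫ - ‖J c x - s‖^2 := by
    rw [show x - J c x = (x - s) - (J c x - s) by abel, inner_sub_right,
      real_inner_self_eq_norm_sq]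
  rw [h3] at h2
  have h4 := real_inner_le_norm (J c x - s) (x - s)
  nlinarith [norm_nonneg (J c x - s), norm_nonneg (x - s)]

/-- resolvent comparison: `‖J l x - x‖ ≤ 2 ‖J m x - x‖` for `0 < l ≤ m`. -/
lemma resolvent_compare {T : H → Set H} (hT : IsMonotoneOp T) {J : ℝ → H → H}
    (hJ : IsResolventFamilyOf J T) {l m : ℝ} (hl : 0 < l) (hlm : l ≤ m)
    (x : H) : ‖J l x - x‖ ≤ 2 * ‖J m x - x‖ := by
  have hm : 0 < m := lt_of_lt_of_le hl hlm
  obtain ⟨y, hy, hly⟩ := hJ l hl x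
  obtain ⟨y', hy', hmy⟩ := hJ m hm x
  simp only at hly hmy
  have h1 : 0 ≤ ⟪J l x - J m x, y - y'⟫ := hT _ _ _ _ hy hy'
  have key : 0 ≤ m * ⟪J l x - J m x, x - J l x⟫ + l * ⟪J l x - J m x, -(x - J m x)⟫ := by
    have h2 : 0 ≤ ⟪J l x - J m x, (m*l) • (y - y')⟫ := by
      rw [real_inner_smul_right]; positivity
    have h3 : (m*l) • (y - y') = m • (l • y) - l • (m • y') := by
      rw [smul_sub, smul_smul, smul_smul, mul_comm l m]
    rw [h3, hly, hmy] at h2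
    rw [inner_neg_right]
    calc (0:ℝ) ≤ ⟪J l x - J m x, m • (x - J l x) - l • (x - J m x)⟫ := h2
      _ = _ := by rw [inner_sub_right, real_inner_smul_right, real_inner_smul_right]; ring
  set u := x - J l x with hu
  set v := x - J m x with hv
  have hpq : J l x - J m x = v - u := by rw [hu, hv]; abel
  rw [hpq] at key
  have e1 : ⟪v - u, u⟫ = ⟪u, v⟫ - ‖u‖^2 := by
    rw [inner_sub_left, real_inner_self_eq_norm_sq, real_inner_comm]
  have e2 : ⟪v - u, -v⟫ = ⟪u, v⟫ - ‖v‖^2 := by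
    rw [inner_neg_right, inner_sub_left, real_inner_self_eq_norm_sq]; ring
  rw [e1, e2] at key
  have hcs : ⟪u, v⟫ ≤ ‖u‖ * ‖v‖ := real_inner_le_norm u v
  have huv : 0 ≤ ⟪u, v⟫ := by nlinarith [sq_nonneg ‖u‖, sq_nonneg ‖v‖]
  have h5 : m * ‖u‖^2 ≤ (m+l) * (‖u‖ * ‖v‖) := by nlinarith [sq_nonneg ‖v‖]
  have h6 : m * ‖u‖^2 ≤ 2*m*(‖u‖*‖v‖) := by nlinarith [mul_nonneg (norm_nonneg u) (norm_nonneg v)]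
  have goal' : ‖u‖ ≤ 2 * ‖v‖ := by
    rcases eq_or_lt_of_le (norm_nonneg u) with h0 | h0
    · rw [← h0]; positivity
    · nlinarith [mul_pos hm h0]
  have eu : J l x - x = -u := by rw [hu]; abel
  have ev : J m x - x = -v := by rw [hv]; abel
  rw [eu, norm_neg, ev, norm_neg]
  exact goal'

lemma arith_core (A t D : ℝ) (ha : 2 ≤ A) (ht : 1 ≤ t) (hD : 1 ≤ D) :
    D/(4*A*t*D+1) + 1/(4*A*t+1) + 1/(t*(4*A*t*D+1)) + (1/A)*(1/(2*A*t+1)) ≤ 1/(A*t) := by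
  have hA0 : 0 < A := by linarith
  have ht0 : 0 < t := by linarith
  have hD0 : 0 < D := by linarith
  have hden1 : 0 < 4*A*t*D+1 := by positivity
  have h1 : D/(4*A*t*D+1) ≤ 1/(4*A*t) := by
    rw [div_le_div_iff₀ hden1 (by positivity)]
    nlinarith
  have h2 : 1/(4*A*t+1) ≤ 1/(4*A*t) := by
    apply one_div_le_one_div_of_le (by positivity); linarith
  have h3 : 1/(t*(4*A*t*D+1)) ≤ 1/(4*A*t) := by
    apply one_div_le_one_div_of_le (by positivity)
    have hx : t ≤ t*t*D := by nlinarith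
    nlinarith [mul_le_mul_of_nonneg_left hx (show (0:ℝ) ≤ 4*A by linarith)]
  have h4 : (1/A)*(1/(2*A*t+1)) ≤ 1/(4*A*t) := by
    rw [div_mul_div_comm, div_le_div_iff₀ (by positivity) (by positivity)]
    nlinarith
  calc D/(4*A*t*D+1) + 1/(4*A*t+1) + 1/(t*(4*A*t*D+1)) + (1/A)*(1/(2*A*t+1))
      ≤ 1/(4*A*t) + 1/(4*A*t) + 1/(4*A*t) + 1/(4*A*t) := by linarith
    _ = 1/(A*t) := by field_simp; ring

lemma key_arith (A t D g lm W U eN JN : ℝ)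
    (ha : 2 ≤ A) (ht : 1 ≤ t) (hD : 1 ≤ D)
    (hg1 : 1/A ≤ g)
    (hlm0 : 0 ≤ lm) (hlm2 : lm ≤ 1/(4*A*t*D+1))
    (hW : 0 ≤ W) (hW2 : W ≤ 1/(2*A*t+1))
    (hU0 : 0 ≤ U) (hU : U ≤ D)
    (heN : 0 ≤ eN) (heN2 : eN ≤ 1/(4*A*t+1))
    (hJN : 0 ≤ JN)
    (hmain : (g - lm) * JN ≤ g*W + lm*U + eN) :
    JN ≤ 1/t := by
  have hA0 : 0 < A := by linarith
  have ht0 : 0 < t := by linarith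
  have hD0 : 0 < D := by linarith
  have hg0 : 0 ≤ g := le_trans (by positivity) hg1
  have hden1 : 0 < 4*A*t*D+1 := by positivity
  have hΛ : (1:ℝ)/(4*A*t*D+1) < 1/A := by
    rw [div_lt_div_iff₀ (by positivity) hA0]
    have htD : 1 ≤ t*D := by nlinarith
    nlinarith [mul_le_mul_of_nonneg_left htD hA0.le]
  have hgΛ : 0 < g - 1/(4*A*t*D+1) := by linarith
  have hglm : 0 < g - lm := by linarith
  have step1 : g*W + lm*U + eN ≤
      g*(1/(2*A*t+1)) + (1/(4*A*t*D+1))*D + 1/(4*A*t+1) := by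
    have e1 : g*W ≤ g*(1/(2*A*t+1)) := mul_le_mul_of_nonneg_left hW2 hg0
    have e2 : lm*U ≤ (1/(4*A*t*D+1))*D := mul_le_mul hlm2 hU hU0 (by positivity)
    linarith
  have core := arith_core A t D ha ht hD
  have id1 : D/(4*A*t*D+1) = (1/(4*A*t*D+1))*D := by ring
  have id2 : 1/(t*(4*A*t*D+1)) = (1/(4*A*t*D+1))*(1/t) := by
    rw [div_mul_div_comm]; ring_nf
  have id3 : 1/(A*t) = (1/A)*(1/t) := by rw [div_mul_div_comm]; ring_nf
  rw [id1, id2, id3] at core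
  have hWb : 1/(2*A*t+1) ≤ 1/t := by
    apply one_div_le_one_div_of_le ht0; nlinarith
  have step3 : (1/A)*(1/t - 1/(2*A*t+1)) ≤ g*(1/t - 1/(2*A*t+1)) :=
    mul_le_mul_of_nonneg_right hg1 (by linarith)
  have step4 : g*(1/(2*A*t+1)) + (1/(4*A*t*D+1))*D + 1/(4*A*t+1) ≤
      (g - 1/(4*A*t*D+1))*(1/t) := by nlinarith [step3]
  have step5 : (g - lm) * JN ≤ (g - lm) * (1/t) := by
    have : (g - 1/(4*A*t*D+1))*(1/t) ≤ (g - lm)*(1/t) := by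
      apply mul_le_mul_of_nonneg_right (by linarith) (by positivity)
    linarith
  exact le_of_mul_le_mul_left (by linarith [step5]) hglm

end Aux

set_option maxHeartbeats 1000000 in
/-- Proposition 4.3: quantitative asymptotic regularity of the mPPA iteration. -/
theorem mPPA_asymptotic_regularity
    {H : Type*} [NormedAddCommGroup H] [InnerProductSpace ℝ H] [CompleteSpace H]
    (T : H → Set H) (hT : IsMaximalMonotoneOp T)
    (J : ℝ → H → H) (hJ : IsResolventFamilyOf J T)
    (s : H) (hsS : (0:H) ∈ T s)
    (u : H) (lam gam del cs : ℕ → ℝ) (e : ℕ → H) (z w : ℕ → H)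
    (hlam01 : ∀ n, lam n ∈ Set.Ioo (0:ℝ) 1)
    (hgam01 : ∀ n, gam n ∈ Set.Ioo (0:ℝ) 1)
    (hdel01 : ∀ n, del n ∈ Set.Ioo (0:ℝ) 1)
    (hsum1 : ∀ n, lam n + gam n + del n = 1)
    (hcs0 : ∀ n, 0 < cs n)
    (hmPPA : ∀ n, z (n+1) = lam n • u + gam n • z n + del n • J (cs n) (z n) + e n)
    (a c : ℕ) (ha : 0 < a) (hc : 0 < c)
    (ℓ E : ℕ → ℕ) (hℓ : Monotone ℓ) (hE : Monotone E)
    (Q1 : ∀ k n : ℕ, ℓ k ≤ n → lam n ≤ 1 / ((k:ℝ)+1))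
    (Q3 : ∀ m : ℕ, 1 / (a:ℝ) ≤ gam m ∧ gam m ≤ 1 - 1 / (a:ℝ))
    (Q4 : ∀ n, 1 / (c:ℝ) ≤ cs n)
    (Q6 : ∀ k n : ℕ, ∑ i ∈ Finset.Icc (E k + 1) (E k + n), ‖e i‖ ≤ 1 / ((k:ℝ)+1))
    (N₁ N₂ N₃ : ℕ)
    (hN₁ : ‖u‖ ≤ (N₁ : ℝ))
    (hN₂ : (∑ i ∈ Finset.range (E 0 + 1), ‖e i‖) + 1 ≤ (N₂ : ℝ))
    (hN₃u : ‖u - s‖ ≤ (N₃ : ℝ)) (hN₃z : ‖z 0 - s‖ ≤ (N₃ : ℝ))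
    (hw : ∀ n, z (n+1) = gam n • z n + (1 - gam n) • w n)
    (χ : ℕ → (ℕ → ℕ) → ℕ) (hχmono : MonotoneFunctional χ)
    (hχ : ∀ k : ℕ, ∀ f : ℕ → ℕ, Monotone f → ∃ n ≤ χ k f,
      ∀ m : ℕ, n ≤ m → m ≤ n + f n → ‖w m - z m‖ ≤ 1 / ((k:ℝ)+1)) :
    ∀ k : ℕ, ∀ f : ℕ → ℕ, Monotone f →
      (∃ n ≤ χ k f, ∀ m : ℕ, n ≤ m → m ≤ n + f n →
        ‖z (m+1) - z m‖ ≤ 1 / ((k:ℝ)+1)) ∧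
      (∃ n ≤ max (muFun ℓ E a (N₂+N₃) N₃ k)
          (χ (2*a*(k+1)) (fTilde ℓ E a (N₂+N₃) N₃ k f)),
        ∀ m : ℕ, n ≤ m → m ≤ n + f n →
          ‖J (cs m) (z m) - z m‖ ≤ 1 / ((k:ℝ)+1)) ∧
      (∃ n ≤ xiChi ℓ E a (N₂+N₃) N₃ χ k f,
        ∀ m : ℕ, n ≤ m → m ≤ n + f n →
          ‖J (1 / (c:ℝ)) (z m) - z m‖ ≤ 1 / ((k:ℝ)+1)) := by
  have hTm : IsMonotoneOp T := hT.1
  have haR : (0:ℝ) < a := by exact_mod_cast ha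
  -- a ≥ 2
  have ha2 : (2:ℝ) ≤ (a:ℝ) := by
    have h3 := Q3 0
    have h4 : 1/(a:ℝ) ≤ 1 - 1/(a:ℝ) := le_trans h3.1 h3.2
    have h5 : 2/(a:ℝ) ≤ 1 := by
      rw [show (2:ℝ)/(a:ℝ) = 1/(a:ℝ) + 1/(a:ℝ) by ring]; linarith
    rw [div_le_one haR] at h5
    linarith
  -- N₂ ≥ 1
  have hN₂1 : (1:ℝ) ≤ (N₂:ℝ) := by
    have h0 : (0:ℝ) ≤ ∑ i ∈ Finset.range (E 0 + 1), ‖e i‖ :=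
      Finset.sum_nonneg fun i _ => norm_nonneg _
    linarith
  -- sum of error norms bounded by N₂
  have hesum : ∀ n : ℕ, ∑ i ∈ Finset.range n, ‖e i‖ ≤ (N₂:ℝ) := by
    intro n
    have hsub : Finset.range n ⊆ Finset.range (E 0 + 1) ∪ Finset.Icc (E 0 + 1) (E 0 + n) := by
      intro i hi
      simp only [Finset.mem_union, Finset.mem_range, Finset.mem_Icc] at *
      omega
    have h0 : ∑ i ∈ Finset.range n, ‖e i‖ ≤
        ∑ i ∈ Finset.range (E 0 + 1) ∪ Finset.Icc (E 0 + 1) (E 0 + n), ‖e i‖ :=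
      Finset.sum_le_sum_of_subset_of_nonneg hsub (fun i _ _ => norm_nonneg _)
    have h1 : ∑ i ∈ Finset.range (E 0 + 1) ∪ Finset.Icc (E 0 + 1) (E 0 + n), ‖e i‖ ≤
        (∑ i ∈ Finset.range (E 0 + 1), ‖e i‖) + ∑ i ∈ Finset.Icc (E 0 + 1) (E 0 + n), ‖e i‖ := by
      have := Finset.sum_union_inter (s₁ := Finset.range (E 0 + 1))
        (s₂ := Finset.Icc (E 0 + 1) (E 0 + n)) (f := fun i => ‖e i‖)
      have hnn : (0:ℝ) ≤ ∑ i ∈ Finset.range (E 0 + 1) ∩ Finset.Icc (E 0 + 1) (E 0 + n), ‖e i‖ :=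
        Finset.sum_nonneg fun i _ => norm_nonneg _
      linarith
    have h2 := Q6 0 n
    norm_num at h2
    linarith
  -- bound on the iterates
  have hzb : ∀ n : ℕ, ‖z n - s‖ ≤ (N₃:ℝ) + ∑ i ∈ Finset.range n, ‖e i‖ := by
    intro n
    induction n with
    | zero => simpa using hN₃z
    | succ n ih =>
      have hid : z (n+1) - s =
          lam n • (u - s) + gam n • (z n - s) + del n • (J (cs n) (z n) - s) + e n := by
        linear_combination (norm := module) (hmPPA n) + (hsum1 n) • s
      have hb : ‖z (n+1) - s‖ ≤ lam n * ‖u - s‖ + gam n * ‖z n - s‖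
          + del n * ‖J (cs n) (z n) - s‖ + ‖e n‖ := by
        rw [hid]
        have t1 := norm_add_le (lam n • (u - s) + gam n • (z n - s) + del n • (J (cs n) (z n) - s)) (e n)
        have t2 := norm_add_le (lam n • (u - s) + gam n • (z n - s)) (del n • (J (cs n) (z n) - s))
        have t3 := norm_add_le (lam n • (u - s)) (gam n • (z n - s))
        simp only [norm_smul, Real.norm_eq_abs] at t2 t3
        rw [abs_of_pos (hlam01 n).1, abs_of_pos (hgam01 n).1] at t3
        rw [abs_of_pos (hdel01 n).1] at t2
        linarith
      have hne : ‖J (cs n) (z n) - s‖ ≤ ‖z n - s‖ :=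
        resolvent_nonexp hTm hJ hsS (hcs0 n) (z n)
      have hS0 : (0:ℝ) ≤ ∑ i ∈ Finset.range n, ‖e i‖ :=
        Finset.sum_nonneg fun i _ => norm_nonneg _
      have b1 : lam n * ‖u - s‖ ≤ lam n * (N₃:ℝ) :=
        mul_le_mul_of_nonneg_left hN₃u (hlam01 n).1.le
      have b2 : gam n * ‖z n - s‖ ≤ gam n * ((N₃:ℝ) + ∑ i ∈ Finset.range n, ‖e i‖) :=
        mul_le_mul_of_nonneg_left ih (hgam01 n).1.le
      have b3 : del n * ‖J (cs n) (z n) - s‖ ≤ del n * ((N₃:ℝ) + ∑ i ∈ Finset.range n, ‖e i‖) :=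
        mul_le_mul_of_nonneg_left (le_trans hne ih) (hdel01 n).1.le
      have hsplit : lam n * (N₃:ℝ) + gam n * ((N₃:ℝ) + ∑ i ∈ Finset.range n, ‖e i‖)
          + del n * ((N₃:ℝ) + ∑ i ∈ Finset.range n, ‖e i‖)
          ≤ (N₃:ℝ) + ∑ i ∈ Finset.range n, ‖e i‖ := by
        have hth : (gam n + del n) * (∑ i ∈ Finset.range n, ‖e i‖) ≤
            1 * (∑ i ∈ Finset.range n, ‖e i‖) :=
          mul_le_mul_of_nonneg_right (by have := hsum1 n; have := (hlam01 n).1; linarith) hS0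
        have hN : lam n * (N₃:ℝ) + gam n * (N₃:ℝ) + del n * (N₃:ℝ) = (N₃:ℝ) := by
          have := hsum1 n; nlinarith [this]
        nlinarith [hth, hN]
      rw [Finset.sum_range_succ]
      linarith
  have hzN : ∀ n : ℕ, ‖z n - s‖ ≤ (N₂:ℝ) + (N₃:ℝ) := fun n =>
    le_trans (hzb n) (by linarith [hesum n])
  -- single error term bound
  have he_single : ∀ K m : ℕ, E K + 1 ≤ m → ‖e m‖ ≤ 1/((K:ℝ)+1) := by
    intro K m hm
    have h := Q6 K (m - E K)
    have hmem : m ∈ Finset.Icc (E K + 1) (E K + (m - E K)) := by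
      simp only [Finset.mem_Icc]; omega
    exact le_trans (Finset.single_le_sum (fun i _ => norm_nonneg (e i)) hmem) h
  intro k f hf
  -- general form of part (ii)
  have part2 : ∀ k' : ℕ, ∃ n ≤ max (muFun ℓ E a (N₂+N₃) N₃ k')
      (χ (2*a*(k'+1)) (fTilde ℓ E a (N₂+N₃) N₃ k' f)), ∀ m : ℕ, n ≤ m → m ≤ n + f n →
        ‖J (cs m) (z m) - z m‖ ≤ 1/((k':ℝ)+1) := by
    intro k'
    set μ := muFun ℓ E a (N₂+N₃) N₃ k' with hμdef
    have hfT : Monotone (fTilde ℓ E a (N₂+N₃) N₃ k' f) := by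
      intro x y hxy
      exact Nat.add_le_add_left (hf (max_le_max le_rfl hxy)) _
    obtain ⟨n₀, hn₀, hwb⟩ := hχ (2*a*(k'+1)) _ hfT
    refine ⟨max μ n₀, max_le_max le_rfl hn₀, ?_⟩
    intro m hm1 hm2
    have hmax_le : max μ n₀ ≤ μ + n₀ := max_le (Nat.le_add_right μ n₀) (Nat.le_add_left n₀ μ)
    have hwin : m ≤ n₀ + fTilde ℓ E a (N₂+N₃) N₃ k' f n₀ := by
      have : fTilde ℓ E a (N₂+N₃) N₃ k' f n₀ = μ + f (max μ n₀) := rfl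
      rw [this]
      omega
    have hwm : ‖w m - z m‖ ≤ 1/((2*(a:ℝ)*((k':ℝ)+1))+1) := by
      have h := hwb m (le_trans (le_max_right _ _) hm1) hwin
      have hcast : ((2*a*(k'+1):ℕ):ℝ) + 1 = 2*(a:ℝ)*((k':ℝ)+1)+1 := by push_cast; ring
      rwa [hcast] at h
    -- facts about m
    have hμm : μ ≤ m := le_trans (le_max_left _ _) hm1
    have hℓm : ℓ (4*a*(k'+1)*((N₂+N₃)+N₃)) ≤ m :=
      le_trans (le_max_left _ _) hμm
    have hEm : E (4*a*(k'+1)) + 1 ≤ m := le_trans (le_max_right _ _) hμm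
    have hlamm : lam m ≤ 1/(4*(a:ℝ)*((k':ℝ)+1)*((N₂:ℝ)+(N₃:ℝ)+(N₃:ℝ))+1) := by
      have h := Q1 _ m hℓm
      have hcast : ((4*a*(k'+1)*((N₂+N₃)+N₃):ℕ):ℝ) + 1
          = 4*(a:ℝ)*((k':ℝ)+1)*((N₂:ℝ)+(N₃:ℝ)+(N₃:ℝ))+1 := by push_cast; ring
      rwa [hcast] at h
    have hem : ‖e m‖ ≤ 1/(4*(a:ℝ)*((k':ℝ)+1)+1) := by
      have h := he_single _ m hEm
      have hcast : ((4*a*(k'+1):ℕ):ℝ) + 1 = 4*(a:ℝ)*((k':ℝ)+1)+1 := by push_cast; ring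
      rwa [hcast] at h
    -- the algebraic identity
    have hid : del m • (J (cs m) (z m) - z m)
        = (1 - gam m) • (w m - z m) - lam m • (u - z m) - e m := by
      have h := (hmPPA m).symm.trans (hw m)
      linear_combination (norm := module) h - (hsum1 m) • (z m)
    have hnorm : del m * ‖J (cs m) (z m) - z m‖ ≤
        (1 - gam m) * ‖w m - z m‖ + lam m * ‖u - z m‖ + ‖e m‖ := by
      have h1 : ‖del m • (J (cs m) (z m) - z m)‖ = del m * ‖J (cs m) (z m) - z m‖ := by
        rw [norm_smul, Real.norm_eq_abs, abs_of_pos (hdel01 m).1]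
      rw [← h1, hid]
      refine le_trans (norm_sub_le _ _) ?_
      have h2 := norm_sub_le ((1 - gam m) • (w m - z m)) (lam m • (u - z m))
      rw [norm_smul, norm_smul, Real.norm_eq_abs, Real.norm_eq_abs,
        abs_of_pos (hlam01 m).1, abs_of_pos (show (0:ℝ) < 1 - gam m by linarith [(hgam01 m).2])] at h2
      linarith
    -- bound on ‖u - z m‖
    have hUb : ‖u - z m‖ ≤ (N₂:ℝ)+(N₃:ℝ)+(N₃:ℝ) := by
      have h1 : ‖u - z m‖ ≤ ‖u - s‖ + ‖z m - s‖ := by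
        have : u - z m = (u - s) - (z m - s) := by abel
        rw [this]; exact norm_sub_le _ _
      linarith [hzN m, hN₃u]
    -- apply the key arithmetic lemma
    have hdel_eq : del m = (1 - gam m) - lam m := by have := hsum1 m; linarith
    have ht' : (1:ℝ) ≤ (k':ℝ)+1 := by
      have : (0:ℝ) ≤ (k':ℝ) := Nat.cast_nonneg _
      linarith
    have hD' : (1:ℝ) ≤ (N₂:ℝ)+(N₃:ℝ)+(N₃:ℝ) := by
      have h0 : (0:ℝ) ≤ (N₃:ℝ) := Nat.cast_nonneg _
      linarith
    have hg' : 1/(a:ℝ) ≤ 1 - gam m := by have := (Q3 m).2; linarith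
    have hmain' : ((1 - gam m) - lam m) * ‖J (cs m) (z m) - z m‖ ≤
        (1 - gam m) * ‖w m - z m‖ + lam m * ‖u - z m‖ + ‖e m‖ := by
      rw [← hdel_eq]; exact hnorm
    exact key_arith (a:ℝ) ((k':ℝ)+1) ((N₂:ℝ)+(N₃:ℝ)+(N₃:ℝ)) (1 - gam m) (lam m)
      (‖w m - z m‖) (‖u - z m‖) (‖e m‖) (‖J (cs m) (z m) - z m‖)
      ha2 ht' hD' hg' (hlam01 m).1.le hlamm (norm_nonneg _) hwm
      (norm_nonneg _) hUb (norm_nonneg _) hem (norm_nonneg _) hmain'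
  -- assemble the three statements
  refine ⟨?_, part2 k, ?_⟩
  · -- part (i)
    obtain ⟨n, hn, hb⟩ := hχ k f hf
    refine ⟨n, hn, ?_⟩
    intro m hm1 hm2
    have h1 := hb m hm1 hm2
    have e1 : z (m+1) - z m = (1 - gam m) • (w m - z m) := by
      linear_combination (norm := module) (hw m)
    rw [e1, norm_smul, Real.norm_eq_abs,
      abs_of_pos (show (0:ℝ) < 1 - gam m by linarith [(hgam01 m).2])]
    have hg1 : 1 - gam m ≤ 1 := by linarith [(hgam01 m).1]
    have him : (0:ℝ) < 1/((k:ℝ)+1) := by positivity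
    nlinarith [norm_nonneg (w m - z m), h1]
  · -- part (iii)
    obtain ⟨n, hn, hb⟩ := part2 (2*k+1)
    have hb2 : n ≤ xiChi ℓ E a (N₂+N₃) N₃ χ k f := by
      have hre : 2*a*(2*k+1+1) = 4*a*(k+1) := by ring
      rw [xiChi, ← hre]
      exact hn
    refine ⟨n, hb2, ?_⟩
    intro m hm1 hm2
    have h1 := hb m hm1 hm2
    have h2 : ‖J (1/(c:ℝ)) (z m) - z m‖ ≤ 2 * ‖J (cs m) (z m) - z m‖ := by
      refine resolvent_compare hTm hJ ?_ (Q4 m) (z m)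
      have : (0:ℝ) < (c:ℝ) := by exact_mod_cast hc
      positivity
    have hcast : ((2*k+1:ℕ):ℝ) + 1 = 2*((k:ℝ)+1) := by push_cast; ring
    rw [hcast] at h1
    have he : 2 * (1/(2*((k:ℝ)+1))) = 1/((k:ℝ)+1) := by
      field_simp
    linarith
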